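/- Let ρ ∈ [2√3 - 3, 1), set D := ρ² + 6ρ - 3, y₋ := (1 - ρ - √D)/2 and y₊ := (1 - ρ + √D)/2. Then -1 < y₋ ≤ y₊ < 1, 3 - ρ - √D > 0, and ((1 + y₊)*(1 - y₋))/((1 - y₊)*(1 + y₋)) = ( √3*(1 + ρ + √D)/(3 - ρ - √D) )². -/
import Mathlib


/-- **Hyperbolic distance between the two horosphere intersection points.**
Let `ρ ∈ [2√3 - 3, 1)`, set `D := ρ² + 6ρ - 3`, `y₋ := (1 - ρ - √D)/2` and
`y₊ := (1 - ρ + √D)/2`.  Then `-1 < y₋ ≤ y₊ < 1`, `3 - ρ - √D > 0`, and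
`((1 + y₊)(1 - y₋)) / ((1 - y₊)(1 + y₋)) = (√3 (1 + ρ + √D) / (3 - ρ - √D))²`. -/
theorem horosphere_intersection_distance (ρ : ℝ)
    (hρ : ρ ∈ Set.Ico (2 * Real.sqrt 3 - 3) 1) :
    -1 < (1 - ρ - Real.sqrt (ρ ^ 2 + 6 * ρ - 3)) / 2 ∧
    (1 - ρ - Real.sqrt (ρ ^ 2 + 6 * ρ - 3)) / 2 ≤
      (1 - ρ + Real.sqrt (ρ ^ 2 + 6 * ρ - 3)) / 2 ∧
    (1 - ρ + Real.sqrt (ρ ^ 2 + 6 * ρ - 3)) / 2 < 1 ∧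
    0 < 3 - ρ - Real.sqrt (ρ ^ 2 + 6 * ρ - 3) ∧
    ((1 + (1 - ρ + Real.sqrt (ρ ^ 2 + 6 * ρ - 3)) / 2) *
        (1 - (1 - ρ - Real.sqrt (ρ ^ 2 + 6 * ρ - 3)) / 2)) /
      ((1 - (1 - ρ + Real.sqrt (ρ ^ 2 + 6 * ρ - 3)) / 2) *
        (1 + (1 - ρ - Real.sqrt (ρ ^ 2 + 6 * ρ - 3)) / 2)) =
      (Real.sqrt 3 * (1 + ρ + Real.sqrt (ρ ^ 2 + 6 * ρ - 3)) /
        (3 - ρ - Real.sqrt (ρ ^ 2 + 6 * ρ - 3))) ^ 2 := by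

  obtain ⟨hρ0, hρ1⟩ := hρ
  have h3 : (Real.sqrt 3) ^ 2 = 3 := Real.sq_sqrt (by norm_num)
  have h3n : (0:ℝ) ≤ Real.sqrt 3 := Real.sqrt_nonneg 3
  have h3gt : Real.sqrt 3 > 3/2 := by nlinarith
  have hρpos : 0 < ρ := by nlinarith
  have hD : 0 ≤ ρ ^ 2 + 6 * ρ - 3 := by nlinarith
  set s := Real.sqrt (ρ ^ 2 + 6 * ρ - 3) with hsdef
  have hs : s ^ 2 = ρ ^ 2 + 6 * ρ - 3 := Real.sq_sqrt hD
  have hs0 : 0 ≤ s := Real.sqrt_nonneg _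
  have h1 : s < 3 - ρ := by nlinarith
  have h2 : s < 1 + ρ := by nlinarith
  have h4 : s < 2 * ρ := by nlinarith
  refine ⟨by linarith, by linarith, by linarith, by linarith, ?_⟩
  have hd1 : (0:ℝ) < (1 - (1 - ρ + s) / 2) * (1 + (1 - ρ - s) / 2) :=
    mul_pos (by nlinarith) (by nlinarith)
  have hd2 : (0:ℝ) < (3 - ρ - s) ^ 2 := pow_pos (by linarith) 2
  rw [div_pow, div_eq_div_iff hd1.ne' hd2.ne']
  linear_combination ((6 + 4*s - 2*s^2 + 4*ρ - 4*ρ*s - 2*ρ^2) * hs +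
    (-3 - 2*s + 4*s^2 + 2*s^3 - s^4 - 8*ρ - 2*ρ*s + 4*ρ*s^2 - 2*ρ*s^3 - 6*ρ^2 +
      2*ρ^2*s + 2*ρ^3*s + ρ^4) * h3) / 4
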